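/- arXiv:1109.4434 — 2 statements merged into one kernel-verified Lean document; each statement's English description precedes it below -/
import Mathlib

section
/- For any Grassmann necklace I = (I_1, ..., I_n), the sets I_i and I_j are pairwise weakly separated: for any i, j one has I_j ∖ I_i ⊆ [j, i) and I_i ∖ I_j ⊆ [i, j) (cyclic intervals). -/
def cpos {n : ℕ} (i a : Fin n) : ℕ := ((a - i : Fin n) : ℕ)

def CyclicallyOrdered {n : ℕ} (a b c d : Fin n) : Prop :=
  0 < cpos a b ∧ cpos a b < cpos a c ∧ cpos a c < cpos a d

instance {n : ℕ} (a b c d : Fin n) : Decidable (CyclicallyOrdered a b c d) := by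
  unfold CyclicallyOrdered; infer_instance

def WeaklySeparated {n : ℕ} (I J : Finset (Fin n)) : Prop :=
  ¬ ∃ a b a' b' : Fin n, CyclicallyOrdered a b a' b' ∧
    a ∈ I \ J ∧ a' ∈ I \ J ∧ b ∈ J \ I ∧ b' ∈ J \ I

def cycIco {n : ℕ} (i j : Fin n) : Finset (Fin n) :=
  Finset.univ.filter (fun x => cpos i x < cpos i j)

def cycIcc {n : ℕ} (i j : Fin n) : Finset (Fin n) :=
  Finset.univ.filter (fun x => cpos i x ≤ cpos i j)

def cycOpen {n : ℕ} (i j : Fin n) : Finset (Fin n) :=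
  Finset.univ.filter (fun x => 0 < cpos i x ∧ cpos i x < cpos i j)

def IsGrassmannNecklace {n : ℕ} [NeZero n] (k : ℕ) (I : Fin n → Finset (Fin n)) : Prop :=
  (∀ i, (I i).card = k) ∧ (∀ i, I i \ {i} ⊆ I (i + 1)) ∧ (∀ i, i ∉ I i → I (i + 1) = I i)

def leShift {n : ℕ} (i : Fin n) (A B : Finset (Fin n)) : Prop :=
  List.Forall₂ (· ≤ ·) ((A.image (fun x => x - i)).sort (· ≤ ·))
    ((B.image (fun x => x - i)).sort (· ≤ ·))

def MemPositroid {n : ℕ} (I : Fin n → Finset (Fin n)) (J : Finset (Fin n)) : Prop :=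
  ∀ i, leShift i (I i) J

def IsWSCollection {n : ℕ} (C : Finset (Finset (Fin n))) : Prop :=
  ∀ X ∈ C, ∀ Y ∈ C, WeaklySeparated X Y

def IsMaxWSCollection {n : ℕ} (k : ℕ) (C : Finset (Finset (Fin n))) : Prop :=
  (∀ X ∈ C, X.card = k) ∧ IsWSCollection C ∧
  ∀ C' : Finset (Finset (Fin n)), C ⊆ C' → (∀ X ∈ C', X.card = k) → IsWSCollection C' → C' = C

open scoped Fin.CommRing Fin.NatCast

lemma cpos_lt' {n : ℕ} [NeZero n] (i a : Fin n) : cpos i a < n := (a - i).isLt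

lemma cpos_self' {n : ℕ} [NeZero n] (i : Fin n) : cpos i i = 0 := by
  simp [cpos]

lemma cpos_add' {n : ℕ} [NeZero n] (i a x : Fin n) :
    cpos i x = (cpos i a + cpos a x) % n := by
  have h : x - i = (a - i) + (x - a) := by ring
  rw [cpos, h, Fin.add_def]; rfl

lemma cpos_split {n : ℕ} [NeZero n] (i a x : Fin n) :
    cpos i x = cpos i a + cpos a x ∨ cpos i x + n = cpos i a + cpos a x := by
  have h := cpos_add' i a x
  have h1 := cpos_lt' i a
  have h2 := cpos_lt' a x
  rcases Nat.lt_or_ge (cpos i a + cpos a x) n with hl | hl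
  · left; rw [h, Nat.mod_eq_of_lt hl]
  · right
    rw [h, Nat.mod_eq_sub_mod hl, Nat.mod_eq_of_lt (by omega)]
    omega

lemma necklace_step {n k : ℕ} [NeZero n] (I : Fin n → Finset (Fin n))
    (hI : IsGrassmannNecklace k I) (i x : Fin n) (hx : x ∈ I i) :
    ∀ m : ℕ, m ≤ cpos i x → x ∈ I (i + (m : Fin n)) := by
  intro m
  induction m with
  | zero => intro _; simpa using hx
  | succ m ih =>
    intro hm
    have hm' : m ≤ cpos i x := Nat.le_of_succ_le hm
    have hmem := ih hm'
    have hmn : m < n := lt_of_le_of_lt hm' (cpos_lt' i x)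
    have hcm : cpos i (i + (m : Fin n)) = m := by
      have : (i + (m : Fin n)) - i = (m : Fin n) := by ring
      rw [cpos, this, Fin.val_cast_of_lt hmn]
    have hne : x ≠ i + (m : Fin n) := by
      intro h
      rw [h] at hm
      omega
    have hmem' : x ∈ I (i + (m : Fin n)) \ {i + (m : Fin n)} := by
      simp [Finset.mem_sdiff, hmem, hne]
    have hres := hI.2.1 _ hmem'
    have hcast : ((m + 1 : ℕ) : Fin n) = (m : Fin n) + 1 := by push_cast; ring
    rw [hcast, ← add_assoc]
    exact hres

lemma necklace_diff_subset {n k : ℕ} [NeZero n] (I : Fin n → Finset (Fin n))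
    (hI : IsGrassmannNecklace k I) (i j : Fin n) :
    I i \ I j ⊆ cycIco i j := by
  intro x hx
  rw [Finset.mem_sdiff] at hx
  simp only [cycIco, Finset.mem_filter, Finset.mem_univ, true_and]
  by_contra h
  push_neg at h
  have hmem := necklace_step I hI i x hx.1 (cpos i j) h
  have hj : i + ((cpos i j : ℕ) : Fin n) = j := by
    rw [cpos, Fin.cast_val_eq_self]; ring
  rw [hj] at hmem
  exact hx.2 hmem

lemma necklace_ws {n k : ℕ} [NeZero n] (I : Fin n → Finset (Fin n))
    (hI : IsGrassmannNecklace k I) (i j : Fin n) :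
    WeaklySeparated (I i) (I j) := by
  rintro ⟨a, b, a', b', ⟨h1, h2, h3⟩, ha, ha', hb, hb'⟩
  have Ha := necklace_diff_subset I hI i j ha
  have Ha' := necklace_diff_subset I hI i j ha'
  have Hb := necklace_diff_subset I hI j i hb
  have Hb' := necklace_diff_subset I hI j i hb'
  simp only [cycIco, Finset.mem_filter, Finset.mem_univ, true_and] at Ha Ha' Hb Hb'
  have s1 := cpos_split i j b
  have s2 := cpos_split i j b'
  have s3 := cpos_split i a b
  have s4 := cpos_split i a a'
  have s5 := cpos_split i a b'
  have s6 := cpos_split i j i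
  have e0 : cpos i i = 0 := cpos_self' i
  have l1 := cpos_lt' i a
  have l2 := cpos_lt' i a'
  have l3 := cpos_lt' i b
  have l4 := cpos_lt' i b'
  have l5 := cpos_lt' a b
  have l6 := cpos_lt' a a'
  have l7 := cpos_lt' a b'
  have l8 := cpos_lt' i j
  have l9 := cpos_lt' j i
  omega

/-- The members of a Grassmann necklace are pairwise weakly separated, with
I_j ∖ I_i ⊆ [j,i) and I_i ∖ I_j ⊆ [i,j). -/
theorem stmt_2 {n k : ℕ} [NeZero n] (I : Fin n → Finset (Fin n))
    (hI : IsGrassmannNecklace k I) :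
    ∀ i j : Fin n, WeaklySeparated (I i) (I j) ∧
      I j \ I i ⊆ cycIco j i ∧ I i \ I j ⊆ cycIco i j := by
  intro i j
  exact ⟨necklace_ws I hI i j, necklace_diff_subset I hI j i,
    necklace_diff_subset I hI i j⟩
end

section
/- For w ∈ S_m, a subset J ⊆ [m] lies in the w-chamber set H(w) if and only if its padding pad(J) satisfies the alignment condition for the decorated permutation ŵ = [2m, 2m−1, ..., m+1, w^{-1}(m), ..., w^{-1}(1)]: for every alignment {i,j} of ŵ, if i ∈ pad(J) then j ∈ pad(J). -/
/-- Padding: J ⊆ [m] becomes the m-element subset of [2m] obtained by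
adjoining the m − |J| largest elements of (m, 2m]. -/
def pad (m : ℕ) (J : Finset (Fin m)) : Finset (Fin (2 * m)) :=
  J.image (Fin.castLE (by omega)) ∪
    Finset.univ.filter (fun x => m + J.card ≤ (x : ℕ))


lemma cpos_val {n : ℕ} [NeZero n] (i a : Fin n) :
    cpos i a = ((a : ℕ) + (n - (i : ℕ))) % n := by
  simp [cpos, Fin.sub_def]; ring_nf

lemma mod_two_cases (x y : ℕ) (h : x < 2 * y) :
    (x % y = x ∧ x < y) ∨ (x % y = x - y ∧ y ≤ x) := by
  rcases lt_or_ge x y with h' | h'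
  · exact Or.inl ⟨Nat.mod_eq_of_lt h', h'⟩
  · refine Or.inr ⟨?_, h'⟩
    rw [Nat.mod_eq_sub_mod h', Nat.mod_eq_of_lt (by omega)]

lemma mem_pad_lt {m : ℕ} (J : Finset (Fin m)) (x : Fin (2 * m)) (hx : (x : ℕ) < m) :
    x ∈ pad m J ↔ (⟨(x : ℕ), hx⟩ : Fin m) ∈ J := by
  unfold pad
  simp only [Finset.mem_union, Finset.mem_image, Finset.mem_filter, Finset.mem_univ, true_and]
  constructor
  · rintro (⟨a, haJ, rfl⟩ | h)
    · exact haJ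
    · omega
  · intro h
    exact Or.inl ⟨⟨(x : ℕ), hx⟩, h, rfl⟩

lemma mem_pad_ge {m : ℕ} (J : Finset (Fin m)) (x : Fin (2 * m)) (hx : m ≤ (x : ℕ)) :
    x ∈ pad m J ↔ m + J.card ≤ (x : ℕ) := by
  unfold pad
  simp only [Finset.mem_union, Finset.mem_image, Finset.mem_filter, Finset.mem_univ, true_and]
  constructor
  · rintro (⟨a, _, rfl⟩ | h)
    · have := a.isLt
      simp only [Fin.coe_castLE] at hx
      omega
    · exact h
  · exact fun h => Or.inr h

/-- J ⊆ [m] lies in the w-chamber set H(w) iff pad(J) satisfies the alignment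
condition for ŵ = [2m, 2m−1, …, m+1, w⁻¹(m), …, w⁻¹(1)]: for every alignment
{i,j} of ŵ (strands ŵ⁻¹(i), i, j, ŵ⁻¹(j) cyclically ordered), i ∈ pad(J)
implies j ∈ pad(J). -/
theorem stmt_19 {m : ℕ} (hm : 0 < m) (w : Equiv.Perm (Fin m))
    (π : Equiv.Perm (Fin (2 * m)))
    (hπ : ∀ i : Fin (2 * m),
      ((i : ℕ) < m → (π i : ℕ) = 2 * m - 1 - (i : ℕ)) ∧
      (∀ j : Fin m, (i : ℕ) = m + (j : ℕ) → (π i : ℕ) = (w.symm j.rev : ℕ)))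
    (J : Finset (Fin m)) :
    (∀ a b : Fin m, a < b → w a < w b → a ∈ J → b ∈ J) ↔
    (∀ i j : Fin (2 * m),
      CyclicallyOrdered (π.symm i) i j (π.symm j) →
        i ∈ pad m J → j ∈ pad m J) := by
  haveI : NeZero (2 * m) := ⟨by omega⟩
  have hπ1 : ∀ (i : Fin (2 * m)) (h : (i : ℕ) < m),
      (π.symm i : ℕ) = 2 * m - 1 - (w ⟨(i : ℕ), h⟩ : ℕ) := by
    intro i h
    have hw := (w ⟨(i : ℕ), h⟩).isLt
    set x : Fin (2 * m) := ⟨2 * m - 1 - (w ⟨(i : ℕ), h⟩ : ℕ), by omega⟩ with hxdef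
    have hx : π x = i := by
      have h2 := (hπ x).2 ⟨m - 1 - (w ⟨(i : ℕ), h⟩ : ℕ), by omega⟩ (by simp [hxdef]; omega)
      apply Fin.ext
      rw [h2]
      have hrev : (⟨m - 1 - (w ⟨(i : ℕ), h⟩ : ℕ), by omega⟩ : Fin m).rev = w ⟨(i : ℕ), h⟩ := by
        apply Fin.ext
        rw [Fin.val_rev]
        simp only
        omega
      rw [hrev, Equiv.symm_apply_apply]
    have hsx : π.symm i = x := by rw [← hx, Equiv.symm_apply_apply]
    rw [hsx]
  have hπ2 : ∀ (i : Fin (2 * m)), m ≤ (i : ℕ) → (π.symm i : ℕ) = 2 * m - 1 - (i : ℕ) := by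
    intro i h
    have hi2 := i.isLt
    set x : Fin (2 * m) := ⟨2 * m - 1 - (i : ℕ), by omega⟩ with hxdef
    have hx : π x = i := by
      have h1 := (hπ x).1 (by simp [hxdef]; omega)
      apply Fin.ext
      rw [h1]
      simp only [hxdef]
      omega
    have hsx : π.symm i = x := by rw [← hx, Equiv.symm_apply_apply]
    rw [hsx]
  have hJm : J.card ≤ m := by
    have := Finset.card_le_card (Finset.subset_univ J)
    simpa using this
  constructor
  · intro H i j hcyc hi
    obtain ⟨h1, h2, h3⟩ := hcyc
    simp only [cpos_val] at h1 h2 h3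
    have hi2 := i.isLt
    have hj2 := j.isLt
    have ha2 := (π.symm i).isLt
    have hd2 := (π.symm j).isLt
    have m1 := mod_two_cases ((i : ℕ) + (2 * m - (π.symm i : ℕ))) (2 * m) (by omega)
    have m2 := mod_two_cases ((j : ℕ) + (2 * m - (π.symm i : ℕ))) (2 * m) (by omega)
    have m3 := mod_two_cases (((π.symm j) : ℕ) + (2 * m - (π.symm i : ℕ))) (2 * m) (by omega)
    rcases lt_or_ge (i : ℕ) m with him | him
    · have ha := hπ1 i him
      have hwi := (w ⟨(i : ℕ), him⟩).isLt
      rcases lt_or_ge (j : ℕ) m with hjm | hjm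
      · have hd := hπ1 j hjm
        have hwj := (w ⟨(j : ℕ), hjm⟩).isLt
        have key : (i : ℕ) < (j : ℕ) ∧ (w ⟨(i : ℕ), him⟩ : ℕ) < (w ⟨(j : ℕ), hjm⟩ : ℕ) := by
          omega
        have hJ1 : (⟨(i : ℕ), him⟩ : Fin m) ∈ J := (mem_pad_lt J i him).1 hi
        have hJ2 : (⟨(j : ℕ), hjm⟩ : Fin m) ∈ J :=
          H _ _ (by simp [Fin.lt_def, key.1]) (by simp [Fin.lt_def, key.2]) hJ1
        exact (mem_pad_lt J j hjm).2 hJ2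
      · have hd := hπ2 j hjm
        omega
    · have ha := hπ2 i him
      rcases lt_or_ge (j : ℕ) m with hjm | hjm
      · have hd := hπ1 j hjm
        have hwj := (w ⟨(j : ℕ), hjm⟩).isLt
        omega
      · have hd := hπ2 j hjm
        have hij : (i : ℕ) < (j : ℕ) := by omega
        have hpi : m + J.card ≤ (i : ℕ) := (mem_pad_ge J i him).1 hi
        exact (mem_pad_ge J j hjm).2 (by omega)
  · intro H a b hab hwab haJ
    have ha2 := a.isLt
    have hb2 := b.isLt
    set i : Fin (2 * m) := ⟨(a : ℕ), by omega⟩ with hidef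
    set j : Fin (2 * m) := ⟨(b : ℕ), by omega⟩ with hjdef
    have him : (i : ℕ) < m := a.isLt
    have hjm : (j : ℕ) < m := b.isLt
    have hea : (⟨(i : ℕ), him⟩ : Fin m) = a := rfl
    have heb : (⟨(j : ℕ), hjm⟩ : Fin m) = b := rfl
    have hwa2 := (w a).isLt
    have hwb2 := (w b).isLt
    have ha := hπ1 i him
    have hd := hπ1 j hjm
    rw [hea] at ha
    rw [heb] at hd
    have hab' : (a : ℕ) < (b : ℕ) := hab
    have hwab' : (w a : ℕ) < (w b : ℕ) := hwab
    have hcyc : CyclicallyOrdered (π.symm i) i j (π.symm j) := by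
      refine ⟨?_, ?_, ?_⟩ <;> simp only [cpos_val] <;>
        [skip; skip; skip]
      · rw [Nat.mod_eq_of_lt (by omega)]; omega
      · rw [Nat.mod_eq_of_lt (by omega), Nat.mod_eq_of_lt (by omega)]
        exact Nat.add_lt_add_right hab _
      · rw [Nat.mod_eq_of_lt (by omega), Nat.mod_eq_of_lt (by omega)]; omega
    have hj := H i j hcyc ((mem_pad_lt J i him).2 (hea ▸ haJ))
    have := (mem_pad_lt J j hjm).1 hj
    rwa [heb] at this
end
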